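/- Let ρ > 0, σ > 0, K > 0, set λ = √(2ρ)/σ, and let p : ℝ → ℝ be even and three times continuously differentiable with p''(x) > 0 for all x and p'''(x) ≤ 0 for all x ≥ 0. Let c > 0 satisfy (σ/√(2ρ)) tanh(λc) = (p'(c) − K/2)/p''(c). Define u(x) = p(x) − (σ² p''(c)/(2ρ cosh(λc))) cosh(λx) for |x| ≤ c and u(x) = u(c) + (K/2)(|x| − c) for |x| > c. Then u is even, u is twice continuously differentiable on ℝ, u''(x) ≥ 0 for x ∈ [0, c], 0 ≤ u'(x) ≤ K/2 for x ∈ [0, c], and |u'(x)| ≤ K/2 for all x ∈ ℝ. -/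

import Mathlib

private lemma reflect_even {f : ℝ → ℝ} {d x : ℝ} (hsym : ∀ y, f (-y) = f y)
    (h : HasDerivAt f d x) : HasDerivAt f (-d) (-x) := by
  have h0 : HasDerivAt f d (- -x) := by rwa [neg_neg]
  have h1 : HasDerivAt (f ∘ fun y => -y) (d * (-1)) (-x) := h0.comp (-x) (hasDerivAt_neg' (-x))
  have h2 : (f ∘ fun y => -y) = f := funext hsym
  rw [h2] at h1
  simpa using h1

private lemma reflect_odd {f : ℝ → ℝ} {d x : ℝ} (hsym : ∀ y, f (-y) = -f y)
    (h : HasDerivAt f d x) : HasDerivAt f d (-x) := by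
  have h0 : HasDerivAt f d (- -x) := by rwa [neg_neg]
  have h1 : HasDerivAt (f ∘ fun y => -y) (d * (-1)) (-x) := h0.comp (-x) (hasDerivAt_neg' (-x))
  have h2 : (fun y => -(f ∘ fun y => -y) y) = f := by funext y; simp [hsym y]
  have h3 := h1.neg
  rw [show -(f ∘ fun y => -y) = f from h2] at h3
  simpa using h3

/-- Properties of the explicit `C²` value function of the one-dimensional singular control
problem: `u` is even, twice continuously differentiable, convex on `[0, c]`, satisfies
`0 ≤ u' ≤ K/2` on `[0, c]` and the gradient constraint `|u'| ≤ K/2` on all of `ℝ`. -/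
theorem explicit_one_dim_value_function_properties
    (ρ σ K : ℝ) (hρ : 0 < ρ) (hσ : 0 < σ) (hK : 0 < K)
    (p : ℝ → ℝ) (hp : ContDiff ℝ 3 p) (heven : ∀ x, p (-x) = p x)
    (hpp : ∀ x, 0 < deriv (deriv p) x)
    (hppp : ∀ x ≥ (0:ℝ), deriv (deriv (deriv p)) x ≤ 0)
    (c : ℝ) (hc : 0 < c)
    (hsp : σ / Real.sqrt (2 * ρ) * Real.tanh (Real.sqrt (2 * ρ) / σ * c)
        = (deriv p c - K / 2) / deriv (deriv p) c) :
    let lam : ℝ := Real.sqrt (2 * ρ) / σ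
    let A : ℝ := σ ^ 2 * deriv (deriv p) c / (2 * ρ * Real.cosh (lam * c))
    let u : ℝ → ℝ := fun x =>
      if |x| ≤ c then p x - A * Real.cosh (lam * x)
      else (p c - A * Real.cosh (lam * c)) + K / 2 * (|x| - c)
    (∀ x : ℝ, u (-x) = u x) ∧
    ContDiff ℝ 2 u ∧
    (∀ x ∈ Set.Icc (0:ℝ) c, 0 ≤ deriv (deriv u) x) ∧
    (∀ x ∈ Set.Icc (0:ℝ) c, 0 ≤ deriv u x ∧ deriv u x ≤ K / 2) ∧
    (∀ x : ℝ, |deriv u x| ≤ K / 2) := by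
  intro lam A u
  have hudef : u = fun x =>
      if |x| ≤ c then p x - A * Real.cosh (lam * x)
      else (p c - A * Real.cosh (lam * c)) + K / 2 * (|x| - c) := rfl
  have h2ρ : (0:ℝ) < 2 * ρ := by linarith
  have hsq : 0 < Real.sqrt (2 * ρ) := Real.sqrt_pos.mpr h2ρ
  have hlam : 0 < lam := div_pos hsq hσ
  have hlamdef : lam = Real.sqrt (2 * ρ) / σ := rfl
  have hlam2 : lam ^ 2 = 2 * ρ / σ ^ 2 := by
    rw [hlamdef, div_pow, Real.sq_sqrt h2ρ.le]
  have hcosh : 0 < Real.cosh (lam * c) := Real.cosh_pos _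
  have hppc : 0 < deriv (deriv p) c := hpp c
  have hAdef : A = σ ^ 2 * deriv (deriv p) c / (2 * ρ * Real.cosh (lam * c)) := rfl
  have hAl2 : A * lam ^ 2 = deriv (deriv p) c / Real.cosh (lam * c) := by
    rw [hAdef, hlam2]
    field_simp
  -- regularity of p
  have hp1 : Differentiable ℝ p := hp.differentiable (by norm_num)
  have hp' : ContDiff ℝ 2 (deriv p) :=
    (contDiff_succ_iff_deriv.mp (show ContDiff ℝ (2+1) p from by norm_num; exact hp)).2.2
  have hp'' : ContDiff ℝ 1 (deriv (deriv p)) :=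
    (contDiff_succ_iff_deriv.mp (show ContDiff ℝ (1+1) (deriv p) from by norm_num; exact hp')).2.2
  have hdp : Differentiable ℝ (deriv p) := hp'.differentiable (by norm_num)
  have hddp : Differentiable ℝ (deriv (deriv p)) := hp''.differentiable (by norm_num)
  -- symmetry of derivatives
  have hpodd : ∀ x, deriv p (-x) = - deriv p x := by
    intro x
    have h1 : deriv (fun y => p (-y)) x = - deriv p (-x) := deriv_comp_neg p x
    rw [funext heven] at h1
    linarith
  have hp2even : ∀ x, deriv (deriv p) (-x) = deriv (deriv p) x := by
    intro x
    have h1 : deriv (fun y => deriv p (-y)) x = - deriv (deriv p) (-x) :=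
      deriv_comp_neg (deriv p) x
    have h2 : (fun y => deriv p (-y)) = fun y => - deriv p y := funext hpodd
    rw [h2, show (fun y => -deriv p y) = -deriv p from rfl, deriv.neg] at h1
    linarith
  have hp1zero : deriv p 0 = 0 := by
    have := hpodd 0
    rw [neg_zero] at this
    linarith
  -- the inner smooth pieces
  set g : ℝ → ℝ := fun x => p x - A * Real.cosh (lam * x) with hg
  set g1 : ℝ → ℝ := fun x => deriv p x - A * lam * Real.sinh (lam * x) with hg1
  set g2 : ℝ → ℝ := fun x => deriv (deriv p) x - A * lam ^ 2 * Real.cosh (lam * x) with hg2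
  have hgd : ∀ x, HasDerivAt g (g1 x) x := by
    intro x
    have h1 : HasDerivAt (fun y => Real.cosh (lam * y)) (Real.sinh (lam * x) * lam) x :=
      (Real.hasDerivAt_cosh (lam * x)).comp x (by simpa using (hasDerivAt_id x).const_mul lam)
    have := ((hp1 x).hasDerivAt).sub (h1.const_mul A)
    refine this.congr_deriv ?_
    simp only [hg1]; ring
  have hg1d : ∀ x, HasDerivAt g1 (g2 x) x := by
    intro x
    have h1 : HasDerivAt (fun y => Real.sinh (lam * y)) (Real.cosh (lam * x) * lam) x :=
      (Real.hasDerivAt_sinh (lam * x)).comp x (by simpa using (hasDerivAt_id x).const_mul lam)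
    have := ((hdp x).hasDerivAt).sub (h1.const_mul (A * lam))
    refine this.congr_deriv ?_
    simp only [hg2]; ring
  -- smooth pasting values
  have hsinh : deriv (deriv p) c * Real.sinh (lam * c)
      = lam * Real.cosh (lam * c) * (deriv p c - K / 2) := by
    have h1 : σ / Real.sqrt (2 * ρ) = 1 / lam := by
      rw [hlamdef]; field_simp
    rw [h1, Real.tanh_eq_sinh_div_cosh] at hsp
    have h2 : Real.sqrt (2 * ρ) / σ * c = lam * c := by rw [hlamdef]
    rw [h2] at hsp
    field_simp at hsp
    linarith
  have hg1c : g1 c = K / 2 := by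
    have key : A * lam * Real.sinh (lam * c) = deriv p c - K / 2 := by
      have h3 : A * lam * Real.sinh (lam * c) * (lam * Real.cosh (lam * c))
          = (deriv p c - K / 2) * (lam * Real.cosh (lam * c)) := by
        calc A * lam * Real.sinh (lam * c) * (lam * Real.cosh (lam * c))
            = (A * lam ^ 2) * Real.cosh (lam * c) * Real.sinh (lam * c) := by ring
          _ = deriv (deriv p) c * Real.sinh (lam * c) := by
              rw [hAl2]; field_simp
          _ = (deriv p c - K / 2) * (lam * Real.cosh (lam * c)) := by rw [hsinh]; ring
      exact mul_right_cancel₀ (by positivity) h3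
    rw [hg1]
    simp only
    linarith [key]
  have hg2c : g2 c = 0 := by
    rw [hg2]
    simp only
    rw [hAl2]
    field_simp
    ring
  -- derivative candidates
  set u1 : ℝ → ℝ := fun x => if |x| ≤ c then g1 x else if 0 ≤ x then K / 2 else -(K / 2)
    with hu1
  set u2 : ℝ → ℝ := fun x => if |x| ≤ c then g2 x else 0 with hu2
  have habsc : |c| ≤ c := by rw [abs_of_pos hc]
  have hu1c : u1 c = K / 2 := by simp only [hu1, if_pos habsc]; exact hg1c
  have hu2c : u2 c = 0 := by simp only [hu2, if_pos habsc]; exact hg2c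
  -- symmetry of u, u1, u2
  have hueven : ∀ x, u (-x) = u x := by
    intro x
    by_cases h : |x| ≤ c
    · simp [hudef, abs_neg, h, heven, mul_neg, Real.cosh_neg]
    · simp [hudef, abs_neg, h]
  have hu1odd : ∀ x, u1 (-x) = - u1 x := by
    intro x
    have h' : |(-x)| = |x| := abs_neg x
    by_cases h : |x| ≤ c
    · simp only [hu1, h' ▸ h, h, if_pos, hg1]
      rw [hpodd, mul_neg, Real.sinh_neg]
      ring
    · have hx0 : 0 < |x| := lt_trans hc (not_le.mp h)
      have hne : ¬ |(-x)| ≤ c := by rwa [h']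
      simp only [hu1, if_neg h, if_neg hne]
      rcases lt_or_gt_of_ne (abs_pos.mp hx0) with hx | hx
      · rw [if_pos (by linarith : (0:ℝ) ≤ -x), if_neg (not_le.mpr hx)]
        ring
      · rw [if_neg (by simp only [not_le]; linarith : ¬ (0:ℝ) ≤ -x), if_pos hx.le]
  have hu2even : ∀ x, u2 (-x) = u2 x := by
    intro x
    have h' : |(-x)| = |x| := abs_neg x
    by_cases h : |x| ≤ c
    · simp only [hu2, h' ▸ h, h, if_pos, hg2]
      rw [hp2even, mul_neg, Real.cosh_neg]
    · have hne : ¬ |(-x)| ≤ c := by rwa [h']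
      simp only [hu2, if_neg h, if_neg hne]
  -- u is differentiable with derivative u1
  have hud : ∀ x, HasDerivAt u (u1 x) x := by
    have hin : ∀ x, |x| < c → HasDerivAt u (u1 x) x := by
      intro x hx
      have hmem : x ∈ Set.Ioo (-c) c := by
        rcases abs_lt.mp hx with ⟨h1, h2⟩; exact ⟨h1, h2⟩
      have h1 : u =ᶠ[nhds x] g := by
        filter_upwards [isOpen_Ioo.mem_nhds hmem] with y hy
        have : |y| ≤ c := abs_le.mpr ⟨hy.1.le, hy.2.le⟩
        simp [hudef, this, hg]
      simp only [hu1]; rw [if_pos hx.le]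
      exact (hgd x).congr_of_eventuallyEq h1
    have hright : ∀ x, c < x → HasDerivAt u (K / 2) x := by
      intro x hx
      have hl : HasDerivAt (fun y => (p c - A * Real.cosh (lam * c)) + K / 2 * (y - c))
          (K / 2) x := by
        simpa using (((hasDerivAt_id x).sub_const c).const_mul (K / 2)).const_add
          (p c - A * Real.cosh (lam * c))
      apply hl.congr_of_eventuallyEq
      filter_upwards [Ioi_mem_nhds hx] with y hy
      have hy0 : (0:ℝ) < y := lt_trans hc hy
      have : ¬ |y| ≤ c := by rw [abs_of_pos hy0]; exact not_le.mpr hy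
      simp only [hudef]; rw [if_neg this, abs_of_pos hy0]
    have hatc : HasDerivAt u (K / 2) c := by
      have hL : HasDerivWithinAt u (K / 2) (Set.Iic c) c := by
        have h0 := ((hgd c).hasDerivWithinAt (s := Set.Iic c))
        rw [hg1c] at h0
        apply h0.congr_of_eventuallyEq
        · filter_upwards [self_mem_nhdsWithin,
            mem_nhdsWithin_of_mem_nhds (Ioi_mem_nhds (by linarith : -c < c))] with y h1 h2
          have : |y| ≤ c := abs_le.mpr ⟨le_of_lt h2, h1⟩
          simp [hudef, this, hg]
        · simp [hudef, habsc, hg]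
      have hR : HasDerivWithinAt u (K / 2) (Set.Ici c) c := by
        have hl : HasDerivAt (fun y => (p c - A * Real.cosh (lam * c)) + K / 2 * (y - c))
            (K / 2) c := by
          simpa using (((hasDerivAt_id c).sub_const c).const_mul (K / 2)).const_add
            (p c - A * Real.cosh (lam * c))
        apply hl.hasDerivWithinAt.congr
        · intro y hy
          rcases eq_or_lt_of_le (Set.mem_Ici.mp hy) with h | h
          · subst h
            simp [hudef, habsc, hg]
          · have hy0 : (0:ℝ) < y := lt_trans hc h
            have : ¬ |y| ≤ c := by rw [abs_of_pos hy0]; exact not_le.mpr h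
            simp only [hudef]; rw [if_neg this, abs_of_pos hy0]
        · simp [hudef, habsc, hg]
      have h3 := hL.union hR
      rw [Set.Iic_union_Ici] at h3
      exact hasDerivWithinAt_univ.mp h3
    have hnn : ∀ x, 0 ≤ x → HasDerivAt u (u1 x) x := by
      intro x hx0
      rcases lt_trichotomy x c with h | h | h
      · exact hin x (by rw [abs_of_nonneg hx0]; exact h)
      · subst h; rw [hu1c]; exact hatc
      · have : ¬ |x| ≤ c := by rw [abs_of_nonneg hx0]; exact not_le.mpr h
        simp only [hu1]; rw [if_neg this, if_pos hx0]
        exact hright x h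
    intro x
    rcases le_or_gt 0 x with hx | hx
    · exact hnn x hx
    · have h1 := hnn (-x) (by linarith)
      have h2 := reflect_even hueven h1
      rw [neg_neg, hu1odd, neg_neg] at h2
      exact h2
  -- u1 is differentiable with derivative u2
  have hu1d : ∀ x, HasDerivAt u1 (u2 x) x := by
    have hin : ∀ x, |x| < c → HasDerivAt u1 (u2 x) x := by
      intro x hx
      have hmem : x ∈ Set.Ioo (-c) c := by
        rcases abs_lt.mp hx with ⟨h1, h2⟩; exact ⟨h1, h2⟩
      have h1 : u1 =ᶠ[nhds x] g1 := by
        filter_upwards [isOpen_Ioo.mem_nhds hmem] with y hy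
        have : |y| ≤ c := abs_le.mpr ⟨hy.1.le, hy.2.le⟩
        simp [hu1, this]
      simp only [hu2]; rw [if_pos hx.le]
      exact (hg1d x).congr_of_eventuallyEq h1
    have hright : ∀ x, c < x → HasDerivAt u1 0 x := by
      intro x hx
      apply (hasDerivAt_const x (K / 2)).congr_of_eventuallyEq
      filter_upwards [Ioi_mem_nhds hx] with y hy
      have hy0 : (0:ℝ) < y := lt_trans hc hy
      have : ¬ |y| ≤ c := by rw [abs_of_pos hy0]; exact not_le.mpr hy
      simp [hu1, this, hy0.le]
    have hatc : HasDerivAt u1 0 c := by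
      have hL : HasDerivWithinAt u1 0 (Set.Iic c) c := by
        have h0 := ((hg1d c).hasDerivWithinAt (s := Set.Iic c))
        rw [hg2c] at h0
        apply h0.congr_of_eventuallyEq
        · filter_upwards [self_mem_nhdsWithin,
            mem_nhdsWithin_of_mem_nhds (Ioi_mem_nhds (by linarith : -c < c))] with y h1 h2
          have : |y| ≤ c := abs_le.mpr ⟨le_of_lt h2, h1⟩
          simp [hu1, this]
        · simp [hu1, habsc]
      have hR : HasDerivWithinAt u1 0 (Set.Ici c) c := by
        apply (hasDerivAt_const c (K / 2)).hasDerivWithinAt.congr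
        · intro y hy
          rcases eq_or_lt_of_le (Set.mem_Ici.mp hy) with h | h
          · subst h; exact hu1c
          · have hy0 : (0:ℝ) < y := lt_trans hc h
            have : ¬ |y| ≤ c := by rw [abs_of_pos hy0]; exact not_le.mpr h
            simp [hu1, this, hy0.le]
        · exact hu1c
      have h3 := hL.union hR
      rw [Set.Iic_union_Ici] at h3
      exact hasDerivWithinAt_univ.mp h3
    have hnn : ∀ x, 0 ≤ x → HasDerivAt u1 (u2 x) x := by
      intro x hx0
      rcases lt_trichotomy x c with h | h | h
      · exact hin x (by rw [abs_of_nonneg hx0]; exact h)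
      · subst h; rw [hu2c]; exact hatc
      · have : ¬ |x| ≤ c := by rw [abs_of_nonneg hx0]; exact not_le.mpr h
        simp only [hu2]; rw [if_neg this]
        exact hright x h
    intro x
    rcases le_or_gt 0 x with hx | hx
    · exact hnn x hx
    · have h1 := hnn (-x) (by linarith)
      have h2 := reflect_odd hu1odd h1
      rw [neg_neg, hu2even] at h2
      exact h2
  have hderiv_u : deriv u = u1 := funext fun x => (hud x).deriv
  have hderiv_u1 : deriv u1 = u2 := funext fun x => (hu1d x).deriv
  -- continuity of u2
  have hcontu2 : Continuous u2 := by
    rw [hu2]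
    apply Continuous.if_le
    · exact (hddp.continuous).sub
        (continuous_const.mul (Real.continuous_cosh.comp (continuous_const.mul continuous_id)))
    · exact continuous_const
    · exact continuous_abs
    · exact continuous_const
    · intro x hx
      rcases abs_eq hc.le |>.mp hx with h | h
      · rw [h]; exact hg2c
      · rw [h]
        have := hu2even c
        rw [hu2] at this
        simp only [abs_neg, habsc, if_pos] at this
        rw [this]
        exact hg2c
  -- C² regularity
  have hC2 : ContDiff ℝ 2 u := by
    rw [show (2 : WithTop ℕ∞) = 1 + 1 from rfl, contDiff_succ_iff_deriv]
    refine ⟨fun x => (hud x).differentiableAt, by simp, ?_⟩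
    rw [hderiv_u, contDiff_one_iff_deriv]
    exact ⟨fun x => (hu1d x).differentiableAt, by rw [hderiv_u1]; exact hcontu2⟩
  -- nonnegativity of g2 on [0, c]
  have hanti : AntitoneOn (deriv (deriv p)) (Set.Ici 0) := by
    apply antitoneOn_of_deriv_nonpos (convex_Ici 0) hddp.continuous.continuousOn
    · exact fun x _ => (hddp x).differentiableWithinAt
    · intro x hx
      rw [interior_Ici] at hx
      exact hppp x (le_of_lt hx)
  have hg2nonneg : ∀ x ∈ Set.Icc (0:ℝ) c, 0 ≤ g2 x := by
    intro x hx
    have h1 : deriv (deriv p) c ≤ deriv (deriv p) x := hanti hx.1 hc.le hx.2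
    have h2 : Real.cosh (lam * x) ≤ Real.cosh (lam * c) := by
      rw [Real.cosh_le_cosh]
      rw [abs_of_nonneg (mul_nonneg hlam.le hx.1), abs_of_nonneg (mul_nonneg hlam.le hc.le)]
      exact mul_le_mul_of_nonneg_left hx.2 hlam.le
    have h3 : A * lam ^ 2 * Real.cosh (lam * x) ≤ deriv (deriv p) c := by
      rw [hAl2, div_mul_eq_mul_div, div_le_iff₀ hcosh]
      calc deriv (deriv p) c * Real.cosh (lam * x)
          ≤ deriv (deriv p) c * Real.cosh (lam * c) :=
            mul_le_mul_of_nonneg_left h2 hppc.le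
        _ = deriv (deriv p) c * Real.cosh (lam * c) := rfl
    rw [hg2]
    simp only
    linarith
  have hu2in : ∀ x ∈ Set.Icc (0:ℝ) c, u2 x = g2 x := by
    intro x hx
    simp only [hu2]; rw [if_pos (by rw [abs_of_nonneg hx.1]; exact hx.2)]
  -- monotonicity of u1 on [0, c]
  have hu1zero : u1 0 = 0 := by
    simp only [hu1]; rw [if_pos (by rw [abs_zero]; exact hc.le)]; simp only [hg1]
    simp [hp1zero]
  have hmono : MonotoneOn u1 (Set.Icc 0 c) := by
    apply monotoneOn_of_deriv_nonneg (convex_Icc 0 c)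
    · exact (Differentiable.continuous fun x => (hu1d x).differentiableAt).continuousOn
    · exact fun x _ => ((hu1d x).differentiableAt).differentiableWithinAt
    · intro x hx
      rw [interior_Icc] at hx
      rw [hderiv_u1, hu2in x ⟨hx.1.le, hx.2.le⟩]
      exact hg2nonneg x ⟨hx.1.le, hx.2.le⟩
  have hbound : ∀ x ∈ Set.Icc (0:ℝ) c, 0 ≤ u1 x ∧ u1 x ≤ K / 2 := by
    intro x hx
    constructor
    · rw [← hu1zero]
      exact hmono (Set.left_mem_Icc.mpr hc.le) hx hx.1
    · rw [← hu1c]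
      exact hmono hx (Set.right_mem_Icc.mpr hc.le) hx.2
  refine ⟨hueven, hC2, ?_, ?_, ?_⟩
  · intro x hx
    rw [hderiv_u, hderiv_u1, hu2in x hx]
    exact hg2nonneg x hx
  · intro x hx
    rw [hderiv_u]
    exact hbound x hx
  · intro x
    rw [hderiv_u]
    have hnn : ∀ y, 0 ≤ y → |u1 y| ≤ K / 2 := by
      intro y hy
      rcases le_or_gt y c with h | h
      · rcases hbound y ⟨hy, h⟩ with ⟨h1, h2⟩
        rw [abs_of_nonneg h1]; exact h2
      · have : ¬ |y| ≤ c := by rw [abs_of_nonneg hy]; exact not_le.mpr h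
        simp only [hu1]; rw [if_neg this, if_pos hy, abs_of_pos (by linarith : (0:ℝ) < K/2)]
    rcases le_or_gt 0 x with hx | hx
    · exact hnn x hx
    · have := hnn (-x) (by linarith)
      rwa [hu1odd, abs_neg] at this
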